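/- Let λ = 1 − 1/√8 ∈ ℚ(√2) and λ' = 1 + 1/√8. The matrix R = [[0,0,2,1],[0,0,1,4/7],[−4,7,0,0],[7,−14,0,0]] lies in the paramodular group K(7), and for all τ₁, τ₂ in the upper half-plane, R maps [[λτ₁+λ'τ₂, (τ₁+τ₂)/2],[(τ₁+τ₂)/2, (2/7)λ'τ₁+(2/7)λτ₂]] ∈ ℍ₂ to [[−λτ₁⁻¹−λ'τ₂⁻¹, −(τ₁⁻¹+τ₂⁻¹)/2],[−(τ₁⁻¹+τ₂⁻¹)/2, −(2/7)λ'τ₁⁻¹−(2/7)λτ₂⁻¹]]. -/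

import Mathlib

open Matrix Real

/-- The standard symplectic matrix `J` over ℚ. -/
def Jmat : Matrix (Fin 4) (Fin 4) ℚ :=
  !![0,0,1,0; 0,0,0,1; -1,0,0,0; 0,-1,0,0]

/-- `σ₇ = diag(1,1,1,7)`. -/
def sigma7 : Matrix (Fin 4) (Fin 4) ℚ :=
  !![1,0,0,0; 0,1,0,0; 0,0,1,0; 0,0,0,7]

/-- Membership in the paramodular group `K(7)`. -/
def memK7 (M : Matrix (Fin 4) (Fin 4) ℚ) : Prop :=
  Mᵀ * Jmat * M = Jmat ∧ ∀ i j, ∃ z : ℤ, (sigma7⁻¹ * M * sigma7) i j = (z : ℚ)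

/-- The matrix `R = [[0,0,2,1],[0,0,1,4/7],[−4,7,0,0],[7,−14,0,0]]`. -/
def Rmat : Matrix (Fin 4) (Fin 4) ℚ :=
  !![0,0,2,1; 0,0,1,4/7; -4,7,0,0; 7,-14,0,0]

noncomputable def lam : ℝ := 1 - 1 / Real.sqrt 8
noncomputable def lam' : ℝ := 1 + 1 / Real.sqrt 8

/-- The point `[[λτ₁+λ'τ₂, (τ₁+τ₂)/2],[(τ₁+τ₂)/2, (2/7)λ'τ₁+(2/7)λτ₂]]` of `ℍ₂`. -/
noncomputable def pt (τ₁ τ₂ : ℂ) : Matrix (Fin 2) (Fin 2) ℂ :=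
  !![(lam : ℂ) * τ₁ + (lam' : ℂ) * τ₂, (τ₁ + τ₂) / 2;
     (τ₁ + τ₂) / 2, (2 / 7) * (lam' : ℂ) * τ₁ + (2 / 7) * (lam : ℂ) * τ₂]

lemma sigma7_inv : sigma7⁻¹ = !![1,0,0,0; 0,1,0,0; 0,0,1,0; 0,0,0,1/7] := by
  apply Matrix.inv_eq_right_inv
  ext i j
  fin_cases i <;> fin_cases j <;>
    norm_num [sigma7, Matrix.mul_apply, Fin.sum_univ_four, Matrix.one_apply,
      Matrix.vecHead, Matrix.vecTail, Fin.ext_iff, Matrix.cons_val_two, Matrix.cons_val_three]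

lemma sqrt8_ne : ((Real.sqrt 8 : ℝ) : ℂ) ≠ 0 := by
  simp [Real.sqrt_eq_zero']

lemma sqrt8_inv_sq : ((Real.sqrt 8 : ℝ) : ℂ)⁻¹ * ((Real.sqrt 8 : ℝ) : ℂ)⁻¹ = 1 / 8 := by
  rw [← mul_inv, ← Complex.ofReal_mul, Real.mul_self_sqrt (by norm_num)]
  norm_num

lemma lam_eq : (lam : ℂ) = 1 - ((Real.sqrt 8 : ℝ) : ℂ)⁻¹ := by
  simp [lam, one_div]

lemma lam'_eq : (lam' : ℂ) = 1 + ((Real.sqrt 8 : ℝ) : ℂ)⁻¹ := by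
  simp [lam', one_div]

lemma pt_det (τ₁ τ₂ : ℂ) : (pt τ₁ τ₂).det = τ₁ * τ₂ / 7 := by
  have Hss := sqrt8_inv_sq
  rw [pt, Matrix.det_fin_two_of, lam_eq, lam'_eq]
  linear_combination (-2/7*τ₂^2 + 4/7*τ₁*τ₂ - 2/7*τ₁^2) * Hss

lemma key (τ₁ τ₂ : ℂ) (ht1 : τ₁ ≠ 0) (ht2 : τ₂ ≠ 0) :
    (!![2,1;1,4/7] : Matrix (Fin 2) (Fin 2) ℂ)
      = pt (-τ₁⁻¹) (-τ₂⁻¹) * (!![-4,7;7,-14] * pt τ₁ τ₂) := by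
  have H1 : τ₁ * τ₁⁻¹ = 1 := mul_inv_cancel₀ ht1
  have H2 : τ₂ * τ₂⁻¹ = 1 := mul_inv_cancel₀ ht2
  have Hss := sqrt8_inv_sq
  set r : ℂ := ((Real.sqrt 8 : ℝ) : ℂ) with hr
  ext i j
  fin_cases i <;> fin_cases j <;>
    simp [pt, Matrix.mul_apply, Fin.sum_univ_two, lam_eq, lam'_eq,
      Matrix.vecHead, Matrix.vecTail]
  · linear_combination (-(1/2) + r⁻¹ - 4*r⁻¹^2) * H1 + (-(1/2) - r⁻¹ - 4*r⁻¹^2) * H2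
      + (-8 + 4*τ₂*τ₁⁻¹ + 4*τ₁*τ₂⁻¹) * Hss
  · linear_combination (-(1/4) - 2*r⁻¹^2) * H1 + (-(1/4) - 2*r⁻¹^2) * H2
      + (-4 + 2*τ₂*τ₁⁻¹ + 2*τ₁*τ₂⁻¹) * Hss
  · linear_combination (-(1/4) - 2*r⁻¹^2) * H1 + (-(1/4) - 2*r⁻¹^2) * H2
      + (-4 + 2*τ₂*τ₁⁻¹ + 2*τ₁*τ₂⁻¹) * Hss
  · linear_combination (-(1/7) - 2/7*r⁻¹ - 8/7*r⁻¹^2) * H1 + (-(1/7) + 2/7*r⁻¹ - 8/7*r⁻¹^2) * H2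
      + (-(16/7) + 8/7*τ₂*τ₁⁻¹ + 8/7*τ₁*τ₂⁻¹) * Hss

theorem R_in_K7_and_action :
    memK7 Rmat ∧
    ∀ τ₁ τ₂ : ℂ, 0 < τ₁.im → 0 < τ₂.im →
      let A : Matrix (Fin 2) (Fin 2) ℂ := !![0, 0; 0, 0]
      let B : Matrix (Fin 2) (Fin 2) ℂ := !![2, 1; 1, 4/7]
      let C : Matrix (Fin 2) (Fin 2) ℂ := !![-4, 7; 7, -14]
      let D : Matrix (Fin 2) (Fin 2) ℂ := !![0, 0; 0, 0]
      (A * pt τ₁ τ₂ + B) * (C * pt τ₁ τ₂ + D)⁻¹ = pt (-τ₁⁻¹) (-τ₂⁻¹) := by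
  constructor
  · constructor
    · have hT : Rmatᵀ = !![0,0,-4,7; 0,0,7,-14; 2,1,0,0; 1,4/7,0,0] := by
        ext i j
        fin_cases i <;> fin_cases j <;> rfl
      have h1 : (!![0,0,-4,7; 0,0,7,-14; 2,1,0,0; 1,4/7,0,0] : Matrix (Fin 4) (Fin 4) ℚ) * Jmat
          = !![4,-7,0,0; -7,14,0,0; 0,0,2,1; 0,0,1,4/7] := by
        ext i j
        fin_cases i <;> fin_cases j <;>
          norm_num [Jmat, Matrix.mul_apply, Fin.sum_univ_four, Matrix.vecHead, Matrix.vecTail, Matrix.cons_val_two, Matrix.cons_val_three]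
      have h2 : (!![4,-7,0,0; -7,14,0,0; 0,0,2,1; 0,0,1,4/7] : Matrix (Fin 4) (Fin 4) ℚ) * Rmat
          = Jmat := by
        ext i j
        fin_cases i <;> fin_cases j <;>
          norm_num [Jmat, Rmat, Matrix.mul_apply, Fin.sum_univ_four, Matrix.vecHead, Matrix.vecTail, Matrix.cons_val_two, Matrix.cons_val_three]
      rw [hT, h1, h2]
    · have h : sigma7⁻¹ * Rmat * sigma7 = !![0,0,2,7; 0,0,1,4; -4,7,0,0; 1,-2,0,0] := by
        rw [sigma7_inv]
        ext i j
        fin_cases i <;> fin_cases j <;>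
          norm_num [sigma7, Rmat, Matrix.mul_apply, Fin.sum_univ_four,
            Matrix.vecHead, Matrix.vecTail, Fin.ext_iff, Matrix.cons_val_two, Matrix.cons_val_three]
      rw [h]
      intro i j
      fin_cases i <;> fin_cases j
      · exact ⟨0, by norm_num⟩
      · exact ⟨0, by norm_num⟩
      · exact ⟨2, by norm_num⟩
      · exact ⟨7, by norm_num⟩
      · exact ⟨0, by norm_num⟩
      · exact ⟨0, by norm_num⟩
      · exact ⟨1, by norm_num⟩
      · exact ⟨4, by norm_num⟩
      · exact ⟨-4, by norm_num⟩
      · exact ⟨7, by norm_num⟩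
      · exact ⟨0, by norm_num⟩
      · exact ⟨0, by norm_num⟩
      · exact ⟨1, by norm_num⟩
      · exact ⟨-2, by norm_num⟩
      · exact ⟨0, by norm_num⟩
      · exact ⟨0, by norm_num⟩
  · intro τ₁ τ₂ h1 h2
    intro A B C D
    have ht1 : τ₁ ≠ 0 := fun h => by simp [h] at h1
    have ht2 : τ₂ ≠ 0 := fun h => by simp [h] at h2
    have H1 : τ₁ * τ₁⁻¹ = 1 := mul_inv_cancel₀ ht1
    have H2 : τ₂ * τ₂⁻¹ = 1 := mul_inv_cancel₀ ht2
    have Hss := sqrt8_inv_sq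
    have hA : A = 0 := by ext i j; fin_cases i <;> fin_cases j <;> simp [A]
    have hD : D = 0 := by ext i j; fin_cases i <;> fin_cases j <;> simp [D]
    rw [hA, hD, Matrix.zero_mul, zero_add, add_zero]
    have hdet : (C * pt τ₁ τ₂).det = τ₁ * τ₂ := by
      rw [Matrix.det_mul, pt_det]
      have hC : C.det = 7 := by norm_num [C, Matrix.det_fin_two_of]
      rw [hC]; ring
    have hdet' : (C * pt τ₁ τ₂).det ≠ 0 := by rw [hdet]; exact mul_ne_zero ht1 ht2
    haveI : Invertible (C * pt τ₁ τ₂).det := invertibleOfNonzero hdet'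
    haveI : Invertible (C * pt τ₁ τ₂) := (C * pt τ₁ τ₂).invertibleOfDetInvertible
    rw [Matrix.mul_inv_eq_iff_eq_mul_of_invertible]
    exact key τ₁ τ₂ ht1 ht2
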